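/- Let L : ℝⁿ → [0, ∞] be a convex function finite in a neighborhood of zero with L(0) = 0 and L(x) > 0 for x ≠ 0, let L₀ : ℝⁿ → [0, ∞) be a convex function with L₀(0) = 0, L₀(x) > 0 for x ≠ 0, satisfying L₀(x)/|x| → ∞ as |x| → ∞, and set L_ε = L + ε·L₀ for ε > 0. Let (Ω, 𝔐, λ) be a probability space and u : Ω → ℝⁿ measurable. Then ‖u‖_{L(λ)} ≤ ‖u‖_{L_ε(λ)} for all ε > 0, and if u is bounded then ‖u‖_{L_ε(λ)} decreases monotonically to ‖u‖_{L(λ)} as ε ↓ 0. -/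

import Mathlib

open MeasureTheory
open scoped ENNReal

/-- Convexity for an `[0, ∞]`-valued function on `ℝⁿ`. -/
def ConvexE {n : ℕ} (L : EuclideanSpace ℝ (Fin n) → ℝ≥0∞) : Prop :=
  ∀ x y : EuclideanSpace ℝ (Fin n), ∀ a b : ℝ, 0 ≤ a → 0 ≤ b → a + b = 1 →
    L (a • x + b • y) ≤ ENNReal.ofReal a * L x + ENNReal.ofReal b * L y

/-- The Luxemburg pseudo-norm `‖u‖_L = inf{r > 0 : ∫ L(u/r) dλ ≤ 1}` (equal to `∞` when no
such `r` exists). -/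
noncomputable def lux {n : ℕ} {Ω : Type*} [MeasurableSpace Ω] (μ : Measure Ω)
    (L : EuclideanSpace ℝ (Fin n) → ℝ≥0∞) (u : Ω → EuclideanSpace ℝ (Fin n)) : ℝ≥0∞ :=
  sInf (ENNReal.ofReal '' {r : ℝ | 0 < r ∧ ∫⁻ ω, L (r⁻¹ • u ω) ∂μ ≤ 1})

lemma lux_mono_aux {n : ℕ} {Ω : Type*} [MeasurableSpace Ω] (μ : Measure Ω)
    {L L' : EuclideanSpace ℝ (Fin n) → ℝ≥0∞} (h : ∀ z, L z ≤ L' z)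
    (u : Ω → EuclideanSpace ℝ (Fin n)) : lux μ L u ≤ lux μ L' u := by
  apply sInf_le_sInf
  apply Set.image_mono
  rintro r ⟨hr, hint⟩
  exact ⟨hr, le_trans (lintegral_mono fun ω => h _) hint⟩

theorem stmt18 {n : ℕ} {Ω : Type*} [MeasurableSpace Ω] (μ : Measure Ω)
    [IsProbabilityMeasure μ] (L : EuclideanSpace ℝ (Fin n) → ℝ≥0∞)
    (hconv : ConvexE L) (h0 : L 0 = 0) (hpos : ∀ x, x ≠ 0 → 0 < L x)
    (hfin : ∃ δ : ℝ, 0 < δ ∧ ∀ x : EuclideanSpace ℝ (Fin n), ‖x‖ < δ → L x ≠ ⊤)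
    (L0 : EuclideanSpace ℝ (Fin n) → ℝ) (hL0conv : ConvexOn ℝ Set.univ L0)
    (hL0nonneg : ∀ x, 0 ≤ L0 x) (hL00 : L0 0 = 0) (hL0pos : ∀ x, x ≠ 0 → 0 < L0 x)
    (hgrowth : ∀ M : ℝ, ∃ R : ℝ, ∀ x : EuclideanSpace ℝ (Fin n), R ≤ ‖x‖ →
      M ≤ L0 x / ‖x‖)
    (u : Ω → EuclideanSpace ℝ (Fin n)) (hu : Measurable u) :
    (∀ ε : ℝ, 0 < ε →
      lux μ L u ≤ lux μ (fun z => L z + ENNReal.ofReal (ε * L0 z)) u) ∧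
    ((∃ M : ℝ, ∀ ω : Ω, ‖u ω‖ ≤ M) →
      (∀ ε₁ ε₂ : ℝ, 0 < ε₁ → ε₁ ≤ ε₂ →
        lux μ (fun z => L z + ENNReal.ofReal (ε₁ * L0 z)) u ≤
          lux μ (fun z => L z + ENNReal.ofReal (ε₂ * L0 z)) u) ∧
      Filter.Tendsto (fun ε : ℝ => lux μ (fun z => L z + ENNReal.ofReal (ε * L0 z)) u)
        (nhdsWithin 0 (Set.Ioi 0)) (nhds (lux μ L u))) := by
  have hle : ∀ ε : ℝ, 0 < ε →
      lux μ L u ≤ lux μ (fun z => L z + ENNReal.ofReal (ε * L0 z)) u := by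
    intro ε hε
    exact lux_mono_aux μ (fun z => le_self_add) u
  refine ⟨hle, fun hbdd => ⟨?_, ?_⟩⟩
  · intro ε₁ ε₂ h1 h12
    refine lux_mono_aux μ (fun z => ?_) u
    exact add_le_add_right (ENNReal.ofReal_le_ofReal
      (mul_le_mul_of_nonneg_right h12 (hL0nonneg z))) _
  · obtain ⟨M, hM⟩ := hbdd
    set M' : ℝ := max M 0 with hM'def
    have hM' : ∀ ω, ‖u ω‖ ≤ M' := fun ω => le_trans (hM ω) (le_max_left _ _)
    rw [tendsto_order]
    constructor
    · intro b hb
      filter_upwards [self_mem_nhdsWithin] with ε hε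
      exact lt_of_lt_of_le hb (hle ε hε)
    · intro b hb
      obtain ⟨x, hx, hxb⟩ := sInf_lt_iff.mp hb
      obtain ⟨r, ⟨hr0, hrint⟩, rfl⟩ := hx
      obtain ⟨s, hrs, hsb⟩ : ∃ s : ℝ, r < s ∧ ENNReal.ofReal s < b := by
        rcases eq_or_ne b ⊤ with hb' | hb'
        · exact ⟨r + 1, by linarith, hb' ▸ ENNReal.ofReal_lt_top⟩
        · have hrb' : r < b.toReal := by
            rw [← ENNReal.ofReal_toReal hb'] at hxb
            exact (ENNReal.ofReal_lt_ofReal_iff_of_nonneg hr0.le).mp hxb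
          refine ⟨(r + b.toReal) / 2, by linarith, ?_⟩
          calc ENNReal.ofReal ((r + b.toReal) / 2) < ENNReal.ofReal b.toReal :=
                (ENNReal.ofReal_lt_ofReal_iff (by linarith)).mpr (by linarith)
            _ = b := ENNReal.ofReal_toReal hb'
      have hs0 : 0 < s := hr0.trans hrs
      -- bound L0 on the closed ball of radius M'/s
      obtain ⟨C, hC⟩ := (isCompact_closedBall (0 : EuclideanSpace ℝ (Fin n))
        (M' / s)).exists_bound_of_continuousOn
        ((hL0conv.continuousOn isOpen_univ).mono (Set.subset_univ _))
      set C' : ℝ := max C 0 with hC'def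
      have hC'0 : 0 ≤ C' := le_max_right _ _
      have hL0bound : ∀ ω, L0 (s⁻¹ • u ω) ≤ C' := by
        intro ω
        have hmem : s⁻¹ • u ω ∈ Metric.closedBall (0 : EuclideanSpace ℝ (Fin n)) (M' / s) := by
          rw [Metric.mem_closedBall, dist_zero_right, norm_smul, norm_inv,
            Real.norm_of_nonneg hs0.le, div_eq_inv_mul]
          exact mul_le_mul_of_nonneg_left (hM' ω) (inv_nonneg.mpr hs0.le)
        calc L0 (s⁻¹ • u ω) ≤ ‖L0 (s⁻¹ • u ω)‖ := le_abs_self _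
          _ ≤ C := hC _ hmem
          _ ≤ C' := le_max_left _ _
      have hrs1 : r / s < 1 := (div_lt_one hs0).mpr hrs
      set δ : ℝ := 1 - r / s with hδdef
      have hδ0 : 0 < δ := by simp only [hδdef]; linarith
      set ε₀ : ℝ := δ / (C' + 1) with hε₀def
      have hε₀0 : 0 < ε₀ := div_pos hδ0 (by linarith)
      filter_upwards [Ioc_mem_nhdsGT_of_mem
        (Set.mem_Ico.mpr ⟨le_refl (0 : ℝ), hε₀0⟩)] with ε hε
      obtain ⟨hε0, hεε₀⟩ := hε
      -- pointwise estimate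
      have hpt : ∀ ω, L (s⁻¹ • u ω) + ENNReal.ofReal (ε * L0 (s⁻¹ • u ω)) ≤
          ENNReal.ofReal (r / s) * L (r⁻¹ • u ω) + ENNReal.ofReal (ε * C') := by
        intro ω
        have hL : L (s⁻¹ • u ω) ≤ ENNReal.ofReal (r / s) * L (r⁻¹ • u ω) := by
          have h1 : (r / s) • (r⁻¹ • u ω) + (1 - r / s) • (0 : EuclideanSpace ℝ (Fin n))
              = s⁻¹ • u ω := by
            rw [smul_zero, add_zero, smul_smul]
            congr 1
            field_simp
          have := hconv (r⁻¹ • u ω) 0 (r / s) (1 - r / s)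
            (div_nonneg hr0.le hs0.le) (by linarith) (by ring)
          rw [h1, h0, mul_zero, add_zero] at this
          exact this
        have hL0' : ENNReal.ofReal (ε * L0 (s⁻¹ • u ω)) ≤ ENNReal.ofReal (ε * C') :=
          ENNReal.ofReal_le_ofReal (mul_le_mul_of_nonneg_left (hL0bound ω) hε0.le)
        exact add_le_add hL hL0'
      have hint : ∫⁻ ω, (L (s⁻¹ • u ω) + ENNReal.ofReal (ε * L0 (s⁻¹ • u ω))) ∂μ ≤ 1 := by
        calc ∫⁻ ω, (L (s⁻¹ • u ω) + ENNReal.ofReal (ε * L0 (s⁻¹ • u ω))) ∂μ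
            ≤ ∫⁻ ω, (ENNReal.ofReal (r / s) * L (r⁻¹ • u ω) + ENNReal.ofReal (ε * C')) ∂μ :=
              lintegral_mono hpt
          _ = ENNReal.ofReal (r / s) * ∫⁻ ω, L (r⁻¹ • u ω) ∂μ + ENNReal.ofReal (ε * C') := by
              rw [lintegral_add_right _ measurable_const,
                lintegral_const_mul' _ _ ENNReal.ofReal_ne_top, lintegral_const,
                measure_univ, mul_one]
          _ ≤ ENNReal.ofReal (r / s) * 1 + ENNReal.ofReal (ε * C') :=
              add_le_add_left (mul_le_mul_right hrint _) _
          _ ≤ 1 := by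
              rw [mul_one, ← ENNReal.ofReal_add (div_nonneg hr0.le hs0.le)
                (mul_nonneg hε0.le hC'0)]
              rw [ENNReal.ofReal_le_one]
              have hεC : ε * C' ≤ δ := by
                calc ε * C' ≤ ε₀ * C' := mul_le_mul_of_nonneg_right hεε₀ hC'0
                  _ = δ * (C' / (C' + 1)) := by rw [hε₀def]; ring
                  _ ≤ δ * 1 := by
                      apply mul_le_mul_of_nonneg_left _ hδ0.le
                      rw [div_le_one (by linarith)]
                      linarith
                  _ = δ := mul_one δ
              simp only [hδdef] at hεC
              linarith
      have hmem : ENNReal.ofReal s ∈ ENNReal.ofReal ''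
          {r : ℝ | 0 < r ∧ ∫⁻ ω, (L (r⁻¹ • u ω) + ENNReal.ofReal (ε * L0 (r⁻¹ • u ω))) ∂μ ≤ 1} :=
        ⟨s, ⟨hs0, hint⟩, rfl⟩
      exact lt_of_le_of_lt (sInf_le hmem) hsb
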